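/- Let Y_1,...,Y_t be independent Bernoulli random variables each with success probability at least 1 - 1/e, where t = 2(D + ln(1/ε))/(1 - 1/e) for a positive integer D and 0 < ε < 1. Then the probability that Y_1 + ... + Y_t < D is at most ε. -/

import Mathlib

open MeasureTheory ProbabilityTheory

theorem stmt3 {Ω : Type*} [MeasureSpace Ω] [IsProbabilityMeasure (ℙ : Measure Ω)]
    (D : ℕ) (hD : 0 < D) (ε : ℝ) (hε0 : 0 < ε) (hε1 : ε < 1)
    (t : ℕ) (ht : (t : ℝ) = 2 * ((D : ℝ) + Real.log (1 / ε)) / (1 - 1 / Real.exp 1))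
    (Y : Fin t → Ω → ℝ) (hmeas : ∀ i, Measurable (Y i))
    (hind : iIndepFun Y ℙ)
    (hval : ∀ i ω, Y i ω = 0 ∨ Y i ω = 1)
    (hbern : ∀ i, ENNReal.ofReal (1 - 1 / Real.exp 1) ≤ ℙ {ω | Y i ω = 1}) :
    ℙ {ω | (∑ i, Y i ω) < (D : ℝ)} ≤ ENNReal.ofReal ε := by
  classical
  set c : ℝ := Real.exp (-1) with hc
  have hc_pos : 0 < c := Real.exp_pos _
  have hc_eq : c = 1 / Real.exp 1 := by
    rw [hc, Real.exp_neg, one_div]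
  have h2e : (2:ℝ) ≤ Real.exp 1 := by
    have := Real.add_one_le_exp (1:ℝ); linarith
  have hc_half : c ≤ 1/2 := by
    rw [hc_eq]
    rw [div_le_div_iff₀ (Real.exp_pos 1) (by norm_num)]
    linarith
  have hc_lt : c < 1 := by linarith
  set q : ℝ := 1 - c with hq
  have hq_pos : 0 < q := by simp [hq]; linarith
  set L : ℝ := Real.log (1 / ε) with hL
  have hL_pos : 0 < L := by
    rw [hL]
    apply Real.log_pos
    rw [lt_div_iff₀ hε0]; linarith
  have hq'' : 1 - 1 / Real.exp 1 = q := by rw [hq, hc_eq]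
  have ht' : (t:ℝ) * q = 2 * ((D:ℝ) + L) := by
    rw [ht, hq'', div_mul_cancel₀ _ hq_pos.ne']
  -- each Y i is the indicator of {Y i = 1}
  have hset : ∀ i, MeasurableSet {ω | Y i ω = 1} := fun i =>
    hmeas i (measurableSet_singleton 1)
  have hYind : ∀ i, Y i = Set.indicator {ω | Y i ω = 1} (fun _ => (1:ℝ)) := by
    intro i
    funext ω
    rcases hval i ω with h | h <;> simp [Set.indicator, h]
  have hYint : ∀ i, Integrable (Y i) ℙ := by
    intro i
    rw [hYind i]
    exact (integrable_const (1:ℝ)).indicator (hset i)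
  have hEY : ∀ i, q ≤ ∫ ω, Y i ω := by
    intro i
    have h1 : ℙ {ω | Y i ω = 1} ≠ ⊤ := measure_ne_top _ _
    have h2 : q ≤ (ℙ {ω | Y i ω = 1}).toReal := by
      rw [hq, hc_eq]
      exact (ENNReal.ofReal_le_iff_le_toReal h1).mp (hbern i)
    calc q ≤ (ℙ {ω | Y i ω = 1}).toReal := h2
      _ = ∫ ω, Y i ω := by
          rw [hYind i]
          rw [MeasureTheory.integral_indicator_const (1:ℝ) (hset i)]
          simp
          rfl
  -- integrability of exp(-1 * Y i)
  have hexp_eq : ∀ i, (fun ω => Real.exp (-1 * Y i ω)) = fun ω => 1 + (c - 1) * Y i ω := by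
    intro i
    funext ω
    rcases hval i ω with h | h <;> simp [h, hc]
  have hint_exp : ∀ i, Integrable (fun ω => Real.exp (-1 * Y i ω)) ℙ := by
    intro i
    rw [hexp_eq i]
    exact (integrable_const (1:ℝ)).add ((hYint i).const_mul _)
  -- mgf bound
  have hmgf : ∀ i, mgf (Y i) ℙ (-1) ≤ Real.exp (-(q*q)) := by
    intro i
    have h1 : mgf (Y i) ℙ (-1) = 1 + (c - 1) * ∫ ω, Y i ω := by
      rw [mgf, show (fun ω => Real.exp (-1 * Y i ω)) = fun ω => 1 + (c - 1) * Y i ω from hexp_eq i]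
      rw [integral_add (integrable_const _) ((hYint i).const_mul _)]
      simp [integral_const_mul]
    have h2 : (c - 1) * ∫ ω, Y i ω ≤ (c - 1) * q := by
      apply mul_le_mul_of_nonpos_left (hEY i)
      linarith
    have h3 : 1 + (c - 1) * q = 1 - q * q := by rw [hq]; ring
    have h4 : 1 - q*q ≤ Real.exp (-(q*q)) := by
      have := Real.add_one_le_exp (-(q*q)); linarith
    rw [h1]
    calc 1 + (c-1) * ∫ ω, Y i ω ≤ 1 + (c-1)*q := by linarith
      _ = 1 - q*q := h3
      _ ≤ _ := h4
  -- Chernoff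
  have hsum_int : Integrable (fun ω => Real.exp (-1 * (∑ i, Y i) ω)) ℙ := by
    have := hind.integrable_exp_mul_sum (t := -1) hmeas
      (s := Finset.univ) (fun i _ => hint_exp i)
    exact this
  have hchern := measure_le_le_exp_mul_mgf (X := ∑ i, Y i) (μ := ℙ) (t := -1)
    ((D:ℝ)) (by norm_num) hsum_int
  have hmgfsum : mgf (∑ i, Y i) ℙ (-1) = ∏ i, mgf (Y i) ℙ (-1) :=
    hind.mgf_sum hmeas Finset.univ
  have hprod : ∏ i : Fin t, mgf (Y i) ℙ (-1) ≤ Real.exp (-(q*q) * t) := by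
    calc ∏ i : Fin t, mgf (Y i) ℙ (-1) ≤ ∏ _i : Fin t, Real.exp (-(q*q)) := by
          apply Finset.prod_le_prod (fun i _ => mgf_nonneg) (fun i _ => hmgf i)
      _ = Real.exp (-(q*q) * t) := by
          rw [Finset.prod_const, Finset.card_univ, Fintype.card_fin, ← Real.exp_nat_mul,
            mul_comm]
  -- final real bound
  have hfinal : Real.exp (-(-1) * (D:ℝ)) * Real.exp (-(q*q) * t) ≤ ε := by
    rw [← Real.exp_add]
    have hexp_le : -(-1) * (D:ℝ) + (-(q*q) * t) ≤ Real.log ε := by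
      have hqq : q * q * t = q * (2 * ((D:ℝ) + L)) := by
        rw [mul_assoc, mul_comm q ((t:ℝ))] at *
        nlinarith [ht']
      have hlogε : Real.log ε = -L := by
        rw [hL, one_div, Real.log_inv, neg_neg]
      rw [hlogε]
      have hDL : (0:ℝ) < (D:ℝ) + L := by
        have : (1:ℝ) ≤ (D:ℝ) := by exact_mod_cast hD
        linarith
      have hq_half : (1:ℝ)/2 ≤ q := by rw [hq]; linarith
      nlinarith [hqq, hq_half, hDL]
    calc Real.exp _ ≤ Real.exp (Real.log ε) := Real.exp_le_exp.mpr hexp_le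
      _ = ε := Real.exp_log hε0
  -- put together
  have hsub : {ω | (∑ i, Y i ω) < (D:ℝ)} ⊆ {ω | (∑ i, Y i) ω ≤ (D:ℝ)} := by
    intro ω hω
    simp only [Set.mem_setOf_eq, Finset.sum_apply] at *
    exact le_of_lt hω
  refine le_trans (measure_mono hsub) ?_
  rw [ENNReal.le_ofReal_iff_toReal_le (measure_ne_top _ _) (le_of_lt hε0)]
  calc (ℙ {ω | (∑ i, Y i) ω ≤ (D:ℝ)}).toReal
      ≤ Real.exp (-(-1) * (D:ℝ)) * mgf (∑ i, Y i) ℙ (-1) := hchern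
    _ ≤ Real.exp (-(-1) * (D:ℝ)) * Real.exp (-(q*q) * t) := by
        apply mul_le_mul_of_nonneg_left _ (Real.exp_pos _).le
        rw [hmgfsum]; exact hprod
    _ ≤ ε := hfinal
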